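/- For the control â(t) := Σ_{n≥0}[1_{[t_n,s_n)}(t) − 1_{[s_n,t_{n+1})}(t)], the function Y(t) := ∫_t^1 â(r) dr satisfies: for t ∈ [s_n, t_{n+1}), Y(t) = 2^{-(n+2)} − (t_{n+1} − t) ≥ 2^{-(n+3)} > 0, and for t ∈ [t_n, s_n), Y(t) = 2^{-(n+3)} + (s_n − t) > 0. In particular Y(t) > 0 for all t ∈ [0,1). -/

import Mathlib

open MeasureTheory Set

noncomputable def tn (n : ℕ) : ℝ := 1 - 1 / 2 ^ n
noncomputable def sn (n : ℕ) : ℝ := (tn n + 3 * tn (n + 1)) / 4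
noncomputable def ahat (x : ℝ) : ℝ :=
  ∑' n : ℕ, ((Ico (tn n) (sn n)).indicator (fun _ => (1 : ℝ)) x
    - (Ico (sn n) (tn (n + 1))).indicator (fun _ => (1 : ℝ)) x)
noncomputable def Yhat (t : ℝ) : ℝ := ∫ r in t..1, ahat r

lemma tn_eq (n : ℕ) : tn n = 1 - 1 / 2 ^ n := rfl
lemma sn_eq (n : ℕ) : sn n = 1 - 5 / 2 ^ (n + 3) := by
  have h : (2:ℝ) ^ n ≠ 0 := by positivity
  simp only [sn, tn, pow_succ, pow_add]
  field_simp
  ring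

lemma tn_lt_sn (n : ℕ) : tn n < sn n := by
  rw [tn_eq, sn_eq]
  have h : (0:ℝ) < 2 ^ n := by positivity
  rw [pow_add, sub_lt_sub_iff_left, div_lt_div_iff₀ (by positivity) (by positivity)]
  nlinarith

lemma sn_lt_tn (n : ℕ) : sn n < tn (n + 1) := by
  rw [tn_eq, sn_eq]
  have h : (0:ℝ) < 2 ^ n := by positivity
  simp only [pow_add, pow_succ, pow_one]
  rw [sub_lt_sub_iff_left, div_lt_div_iff₀ (by positivity) (by positivity)]
  nlinarith

lemma tn_mono : StrictMono tn := strictMono_nat_of_lt_succ fun n =>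
  (tn_lt_sn n).trans (sn_lt_tn n)

lemma tn_lt_one (n : ℕ) : tn n < 1 := by
  have : (0:ℝ) < 1/2^n := by positivity
  rw [tn_eq]; linarith

lemma tn_zero : tn 0 = 0 := by norm_num [tn_eq]

-- if x is not in block m = Ico (tn m) (tn (m+1)), term m vanishes
lemma term_eq_zero {m : ℕ} {x : ℝ} (hx : x ∉ Ico (tn m) (tn (m + 1))) :
    (Ico (tn m) (sn m)).indicator (fun _ => (1 : ℝ)) x
      - (Ico (sn m) (tn (m + 1))).indicator (fun _ => (1 : ℝ)) x = 0 := by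
  rw [indicator_of_notMem (fun h => hx ⟨h.1, h.2.trans_le (sn_lt_tn m).le⟩),
    indicator_of_notMem (fun h => hx ⟨(tn_lt_sn m).le.trans h.1, h.2⟩), sub_zero]

lemma block_disjoint {m n : ℕ} (h : m ≠ n) {x : ℝ} (hxn : x ∈ Ico (tn n) (tn (n + 1))) :
    x ∉ Ico (tn m) (tn (m + 1)) := by
  intro hxm
  rcases h.lt_or_gt with h' | h'
  · exact absurd (hxn.1.trans_lt hxm.2) (not_lt.mpr (tn_mono.monotone h'))
  · exact absurd (hxm.1.trans_lt hxn.2) (not_lt.mpr (tn_mono.monotone h'))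

lemma ahat_eq_one {n : ℕ} {x : ℝ} (hx : x ∈ Ico (tn n) (sn n)) : ahat x = 1 := by
  have hxb : x ∈ Ico (tn n) (tn (n + 1)) := ⟨hx.1, hx.2.trans (sn_lt_tn n)⟩
  rw [ahat, tsum_eq_single n (fun m hm => term_eq_zero (block_disjoint hm hxb))]
  rw [indicator_of_mem hx, indicator_of_notMem (fun h => absurd hx.2 (not_lt.mpr h.1)), sub_zero]

lemma ahat_eq_neg_one {n : ℕ} {x : ℝ} (hx : x ∈ Ico (sn n) (tn (n + 1))) : ahat x = -1 := by
  have hxb : x ∈ Ico (tn n) (tn (n + 1)) := ⟨(tn_lt_sn n).le.trans hx.1, hx.2⟩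
  rw [ahat, tsum_eq_single n (fun m hm => term_eq_zero (block_disjoint hm hxb))]
  rw [indicator_of_mem hx, indicator_of_notMem (fun h => absurd hx.1 (not_le.mpr h.2)), zero_sub]

lemma ahat_eq_zero {x : ℝ} (hx : x < 0 ∨ 1 ≤ x) : ahat x = 0 := by
  have hb : ∀ m, x ∉ Ico (tn m) (tn (m + 1)) := by
    intro m hm
    rcases hx with h | h
    · have h0 : (0:ℝ) ≤ tn m := tn_zero ▸ tn_mono.monotone (Nat.zero_le m)
      linarith [hm.1]
    · exact absurd (h.trans_lt (hm.2.trans (tn_lt_one (m+1)))) (lt_irrefl _)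
  rw [ahat]
  convert tsum_zero with m
  exact term_eq_zero (hb m)

lemma exists_block {x : ℝ} (hx : x ∈ Ico (0:ℝ) 1) : ∃ n, x ∈ Ico (tn n) (tn (n + 1)) := by
  have hex : ∃ m : ℕ, x < tn m := by
    obtain ⟨k, hk⟩ := exists_pow_lt_of_lt_one (sub_pos.mpr hx.2) (by norm_num : (1:ℝ)/2 < 1)
    refine ⟨k, ?_⟩
    rw [tn_eq, ← one_div_pow]
    linarith
  classical
  obtain ⟨m, hm, hmin⟩ := Nat.findX hex
  match m, hm, hmin with
  | 0, hm, _ => exact absurd hm (not_lt.mpr (tn_zero ▸ hx.1))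
  | n + 1, hm, hmin => exact ⟨n, not_lt.mp (fun h => hmin n (Nat.lt_succ_self n) h), hm⟩

lemma ahat_repr : ahat = fun x => (⋃ n, Ico (tn n) (sn n)).indicator (fun _ => (1:ℝ)) x
    - (⋃ n, Ico (sn n) (tn (n + 1))).indicator (fun _ => (1:ℝ)) x := by
  funext x
  rcases lt_or_ge x 0 with h | h
  · rw [ahat_eq_zero (Or.inl h), indicator_of_notMem, indicator_of_notMem, sub_zero]
    · rintro hmem
      simp only [mem_iUnion] at hmem
      obtain ⟨n, hn⟩ := hmem
      have h0 : (0:ℝ) ≤ tn n := tn_zero ▸ tn_mono.monotone (Nat.zero_le n)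
      have := (tn_lt_sn n).le.trans hn.1
      linarith
    · rintro hmem
      simp only [mem_iUnion] at hmem
      obtain ⟨n, hn⟩ := hmem
      have h0 : (0:ℝ) ≤ tn n := tn_zero ▸ tn_mono.monotone (Nat.zero_le n)
      linarith [hn.1]
  rcases le_or_gt 1 x with h1 | h1
  · rw [ahat_eq_zero (Or.inr h1), indicator_of_notMem, indicator_of_notMem, sub_zero]
    · rintro hmem
      simp only [mem_iUnion] at hmem
      obtain ⟨n, hn⟩ := hmem
      linarith [hn.2, tn_lt_one (n+1)]
    · rintro hmem
      simp only [mem_iUnion] at hmem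
      obtain ⟨n, hn⟩ := hmem
      linarith [hn.2, sn_lt_tn n, tn_lt_one (n+1)]
  obtain ⟨n, hn⟩ := exists_block ⟨h, h1⟩
  rcases lt_or_ge x (sn n) with h2 | h2
  · have hmem1 : x ∈ ⋃ m, Ico (tn m) (sn m) :=
      mem_iUnion.mpr ⟨n, show x ∈ Ico (tn n) (sn n) from ⟨hn.1, h2⟩⟩
    have hmem2 : x ∉ ⋃ m, Ico (sn m) (tn (m + 1)) := by
      rintro hmem
      simp only [mem_iUnion] at hmem
      obtain ⟨m, hm⟩ := hmem
      rcases eq_or_ne m n with rfl | hne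
      · linarith [hm.1]
      · exact block_disjoint hne hn ⟨(tn_lt_sn m).le.trans hm.1, hm.2⟩
    rw [ahat_eq_one ⟨hn.1, h2⟩, indicator_of_mem hmem1, indicator_of_notMem hmem2, sub_zero]
  · have hmem2 : x ∈ ⋃ m, Ico (sn m) (tn (m + 1)) :=
      mem_iUnion.mpr ⟨n, show x ∈ Ico (sn n) (tn (n + 1)) from ⟨h2, hn.2⟩⟩
    have hmem1 : x ∉ ⋃ m, Ico (tn m) (sn m) := by
      rintro hmem
      simp only [mem_iUnion] at hmem
      obtain ⟨m, hm⟩ := hmem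
      rcases eq_or_ne m n with rfl | hne
      · linarith [hm.2]
      · exact block_disjoint hne hn ⟨hm.1, hm.2.trans (sn_lt_tn m)⟩
    rw [ahat_eq_neg_one ⟨h2, hn.2⟩, indicator_of_mem hmem2, indicator_of_notMem hmem1, zero_sub]

lemma ahat_measurable : Measurable ahat := by
  rw [ahat_repr]
  exact ((measurable_const.indicator (MeasurableSet.iUnion fun n => measurableSet_Ico)).sub
    (measurable_const.indicator (MeasurableSet.iUnion fun n => measurableSet_Ico)))

lemma ahat_abs_le (x : ℝ) : ‖ahat x‖ ≤ 1 := by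
  rcases lt_or_ge x 0 with h | h
  · simp [ahat_eq_zero (Or.inl h)]
  rcases le_or_gt 1 x with h1 | h1
  · simp [ahat_eq_zero (Or.inr h1)]
  obtain ⟨n, hn⟩ := exists_block ⟨h, h1⟩
  rcases lt_or_ge x (sn n) with h2 | h2
  · simp [ahat_eq_one ⟨hn.1, h2⟩]
  · simp [ahat_eq_neg_one ⟨h2, hn.2⟩]

lemma ahat_ii (a b : ℝ) : IntervalIntegrable ahat volume a b := by
  rw [intervalIntegrable_iff]
  refine Integrable.mono' (g := fun _ => (1:ℝ)) ?_ ahat_measurable.aestronglyMeasurable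
    (Filter.Eventually.of_forall fun x => ahat_abs_le x)
  exact (integrableOn_const_iff enorm_ne_top).mpr (Or.inr measure_Ioc_lt_top)

lemma ae_ne (c : ℝ) : ∀ᵐ x : ℝ, x ≠ c := by
  simpa [ae_iff] using measure_singleton (μ := (volume : Measure ℝ)) c

lemma integral_pos_piece {n : ℕ} {a b : ℝ} (h1 : tn n ≤ a) (h2 : a ≤ b) (h3 : b ≤ sn n) :
    ∫ x in a..b, ahat x = b - a := by
  have : ∫ x in a..b, ahat x = ∫ _ in a..b, (1:ℝ) := by
    apply intervalIntegral.integral_congr_ae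
    filter_upwards [ae_ne (sn n)] with x hxne hx
    rw [uIoc_of_le h2] at hx
    exact ahat_eq_one ⟨h1.trans hx.1.le, lt_of_le_of_ne (hx.2.trans h3) hxne⟩
  rw [this]; simp

lemma integral_neg_piece {n : ℕ} {a b : ℝ} (h1 : sn n ≤ a) (h2 : a ≤ b) (h3 : b ≤ tn (n + 1)) :
    ∫ x in a..b, ahat x = -(b - a) := by
  have : ∫ x in a..b, ahat x = ∫ _ in a..b, (-1:ℝ) := by
    apply intervalIntegral.integral_congr_ae
    filter_upwards [ae_ne (tn (n + 1))] with x hxne hx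
    rw [uIoc_of_le h2] at hx
    exact ahat_eq_neg_one ⟨h1.trans hx.1.le, lt_of_le_of_ne (hx.2.trans h3) hxne⟩
  rw [this]; simp

lemma Yhat_split (t t' : ℝ) : Yhat t = (∫ x in t..t', ahat x) + Yhat t' := by
  rw [Yhat, Yhat, intervalIntegral.integral_add_adjacent_intervals (ahat_ii t t') (ahat_ii t' 1)]

lemma sn_sub_tn (n : ℕ) : sn n - tn n = 3 / 2 ^ (n + 3) := by
  have h : (2:ℝ) ^ n ≠ 0 := by positivity
  rw [sn_eq, tn_eq, pow_add]
  field_simp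
  ring

lemma tn_sub_sn (n : ℕ) : tn (n + 1) - sn n = 1 / 2 ^ (n + 3) := by
  have h : (2:ℝ) ^ n ≠ 0 := by positivity
  rw [sn_eq, tn_eq, pow_add, pow_succ]
  field_simp
  ring

lemma Yhat_rec (n : ℕ) : Yhat (tn n) = 1 / 2 ^ (n + 2) + Yhat (tn (n + 1)) := by
  have h1 := integral_pos_piece (le_refl (tn n)) (tn_lt_sn n).le (le_refl (sn n))
  have h2 := integral_neg_piece (le_refl (sn n)) (sn_lt_tn n).le (le_refl (tn (n + 1)))
  rw [Yhat_split (tn n) (sn n), h1, Yhat_split (sn n) (tn (n + 1)), h2,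
    sn_sub_tn, tn_sub_sn]
  have h3 : (2:ℝ) ^ n ≠ 0 := by positivity
  rw [pow_add, pow_add]
  field_simp
  ring

lemma Yhat_norm_le (t : ℝ) : ‖Yhat t‖ ≤ 1 * |1 - t| :=
  intervalIntegral.norm_integral_le_of_norm_le_const fun x _ => ahat_abs_le x

lemma Yhat_tn (n : ℕ) : Yhat (tn n) = 1 / 2 ^ (n + 1) := by
  have hD : ∀ n : ℕ, Yhat (tn n) - 1 / 2 ^ (n + 1) = Yhat (tn 0) - 1 / 2 ^ (0 + 1) := by
    intro n
    induction n with
    | zero => rfl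
    | succ k ih =>
      rw [← ih, Yhat_rec k]
      have h3 : (2:ℝ) ^ k ≠ 0 := by positivity
      simp only [pow_add, pow_succ, pow_one]
      field_simp
      ring
  have hlim : Filter.Tendsto (fun n : ℕ => Yhat (tn n) - 1 / 2 ^ (n + 1))
      Filter.atTop (nhds 0) := by
    have h1 : Filter.Tendsto (fun n : ℕ => Yhat (tn n)) Filter.atTop (nhds 0) := by
      refine squeeze_zero_norm (a := fun n : ℕ => (1/2 : ℝ) ^ n) (fun n => ?_)
        (tendsto_pow_atTop_nhds_zero_of_lt_one (by norm_num) (by norm_num))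
      have := Yhat_norm_le (tn n)
      rw [tn_eq] at this
      show ‖Yhat (tn n)‖ ≤ (1/2:ℝ) ^ n
      rw [tn_eq, div_pow, one_pow]
      calc ‖Yhat (1 - 1 / 2 ^ n)‖ ≤ 1 * |1 - (1 - 1/2^n)| := this
        _ = 1 / 2 ^ n := by
            rw [one_mul, show (1:ℝ) - (1 - 1/2^n) = 1/2^n by ring,
              abs_of_nonneg (by positivity : (0:ℝ) ≤ 1/2^n)]
    have h2 : Filter.Tendsto (fun n : ℕ => (1:ℝ) / 2 ^ (n + 1)) Filter.atTop (nhds 0) := by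
      have := tendsto_pow_atTop_nhds_zero_of_lt_one (r := (1/2:ℝ)) (by norm_num) (by norm_num)
      have h := this.div_const 2
      simp only [zero_div] at h
      convert h using 2 with n
      rw [div_pow, one_pow, pow_succ]
      ring
    simpa using h1.sub h2
  have hc : Filter.Tendsto (fun n : ℕ => Yhat (tn n) - 1 / 2 ^ (n + 1))
      Filter.atTop (nhds (Yhat (tn 0) - 1 / 2 ^ (0 + 1))) := by
    simp only [hD]
    exact tendsto_const_nhds
  have h0 : Yhat (tn 0) - 1 / 2 ^ (0 + 1) = 0 := tendsto_nhds_unique hc hlim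
  have := hD n
  rw [h0] at this
  linarith

lemma Yhat_sn (n : ℕ) : Yhat (sn n) = 1 / 2 ^ (n + 3) := by
  have h2 := integral_neg_piece (le_refl (sn n)) (sn_lt_tn n).le (le_refl (tn (n + 1)))
  rw [Yhat_split (sn n) (tn (n + 1)), h2, tn_sub_sn, Yhat_tn]
  have h3 : (2:ℝ) ^ n ≠ 0 := by positivity
  simp only [pow_add, pow_succ, pow_one]
  field_simp
  ring

lemma part2 (n : ℕ) (t : ℝ) (ht : t ∈ Ico (sn n) (tn (n + 1))) :
    Yhat t = 1 / 2 ^ (n + 2) - (tn (n + 1) - t) := by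
  rw [Yhat_split t (tn (n + 1)), integral_neg_piece ht.1 ht.2.le (le_refl _), Yhat_tn]
  have h3 : (2:ℝ) ^ n ≠ 0 := by positivity
  simp only [pow_add, pow_succ, pow_one]
  field_simp
  ring

lemma part1 (n : ℕ) (t : ℝ) (ht : t ∈ Ico (tn n) (sn n)) :
    Yhat t = 1 / 2 ^ (n + 3) + (sn n - t) := by
  rw [Yhat_split t (sn n), integral_pos_piece ht.1 ht.2.le (le_refl _), Yhat_sn]
  ring

theorem stmt6 :
    (∀ n : ℕ, ∀ t ∈ Ico (sn n) (tn (n + 1)),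
      Yhat t = 1 / 2 ^ (n + 2) - (tn (n + 1) - t) ∧ 1 / 2 ^ (n + 3) ≤ Yhat t) ∧
    (∀ n : ℕ, ∀ t ∈ Ico (tn n) (sn n),
      Yhat t = 1 / 2 ^ (n + 3) + (sn n - t)) ∧
    (∀ t ∈ Ico (0 : ℝ) 1, 0 < Yhat t) := by
  refine ⟨fun n t ht => ⟨part2 n t ht, ?_⟩, fun n t ht => part1 n t ht, fun t ht => ?_⟩
  · rw [part2 n t ht]
    have h1 : tn (n + 1) - t ≤ 1 / 2 ^ (n + 3) := by
      have := tn_sub_sn n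
      linarith [ht.1]
    have h2 : (1:ℝ) / 2 ^ (n + 2) = 2 / 2 ^ (n + 3) := by
      rw [pow_succ]; ring
    rw [h2]
    have h4 : (2:ℝ) / 2 ^ (n + 3) = 2 * (1 / 2 ^ (n + 3)) := by ring
    have : (0:ℝ) < 1 / 2 ^ (n + 3) := by positivity
    linarith
  · obtain ⟨n, hn⟩ := exists_block ht
    rcases lt_or_ge t (sn n) with h2 | h2
    · rw [part1 n t ⟨hn.1, h2⟩]
      have : (0:ℝ) < 1 / 2 ^ (n + 3) := by positivity
      linarith
    · rw [part2 n t ⟨h2, hn.2⟩]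
      have h1 : tn (n + 1) - t ≤ 1 / 2 ^ (n + 3) := by
        have := tn_sub_sn n
        linarith
      have h3 : (1:ℝ) / 2 ^ (n + 2) = 2 * (1 / 2 ^ (n + 3)) := by rw [pow_succ]; ring
      have : (0:ℝ) < 1 / 2 ^ (n + 3) := by positivity
      linarith
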